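/- Let f : (0,∞) → ℝ be a strictly convex function, and let a₁, a₂, b₁, b₂ ∈ [0,∞) with a₁ + a₂ > 0 and b₁ + b₂ > 0. Suppose (b₁+b₂)·f((a₁+a₂)/(b₁+b₂)) = b₁·f(a₁/b₁) + b₂·f(a₂/b₂), where the perspective expression b·f(a/b) is interpreted by the conventions b·f(0/b) = f(0⁺)·b for b ≥ 0 and 0·f(a/0) = f'(∞)·a for a > 0 (with (+∞)·0 = 0). Then there exists k > 0 such that (a₁,a₂) = k·(b₁,b₂). -/

import Mathlib

open Filter Set

/-- The perspective expression `b·f(a/b)` with values in `(-∞,+∞]`, using the conventions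
`b·f(0/b) = f(0⁺)·b` for `b ≥ 0` and `0·f(a/0) = f'(∞)·a` for `a > 0`
(with `(+∞)·0 = 0`). Here `f0` plays the role of `f(0⁺)` and `finf` of `f'(∞)`. -/
noncomputable def perspective (f : ℝ → ℝ) (f0 finf : EReal) (a b : ℝ) : EReal :=
  if 0 < b then
    (if 0 < a then ((b * f (a / b) : ℝ) : EReal) else f0 * (b : EReal))
  else finf * (a : EReal)


lemma tendsto_slope_atTop (f : ℝ → ℝ) (r : ℝ)
    (h : Tendsto (fun t : ℝ => f t / t) atTop (nhds r)) (w : ℝ) :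
    Tendsto (fun z : ℝ => (f z - f w) / (z - w)) atTop (nhds r) := by
  have hsub : Tendsto (fun z : ℝ => z - w) atTop atTop := by
    simpa [sub_eq_add_neg] using tendsto_atTop_add_const_right atTop (-w) tendsto_id
  have h2 : Tendsto (fun z : ℝ => f w / (z - w)) atTop (nhds 0) :=
    tendsto_const_nhds.div_atTop hsub
  have h3 : Tendsto (fun z : ℝ => 1 + w / (z - w)) atTop (nhds 1) := by
    simpa using tendsto_const_nhds.add ((tendsto_const_nhds (x := w)).div_atTop hsub)
  have hmain : Tendsto (fun z : ℝ => f z / z * (1 + w / (z - w)) - f w / (z - w)) atTop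
      (nhds r) := by
    simpa using (h.mul h3).sub h2
  refine hmain.congr' ?_
  filter_upwards [eventually_gt_atTop (max w 0 + 1)] with z hz
  have hz0 : z ≠ 0 := by
    have := le_max_right w 0; nlinarith [le_max_right w (0:ℝ)]
  have hzw : z - w ≠ 0 := by
    have := le_max_left w (0:ℝ); nlinarith [le_max_left w (0:ℝ)]
  field_simp
  ring

lemma slope_le_of_tendsto (f : ℝ → ℝ) (hf : ConvexOn ℝ (Set.Ioi 0) f) (r : ℝ)
    (h : Tendsto (fun t : ℝ => f t / t) atTop (nhds r)) {w z : ℝ} (hw : 0 < w) (hwz : w < z) :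
    (f z - f w) / (z - w) ≤ r := by
  refine ge_of_tendsto (tendsto_slope_atTop f r h w) ?_
  filter_upwards [eventually_ge_atTop z] with z' hz'
  rcases eq_or_lt_of_le hz' with rfl | hlt
  · exact le_refl _
  · exact hf.secant_mono (mem_Ioi.mpr hw) (mem_Ioi.mpr (hw.trans hwz))
      (mem_Ioi.mpr (hw.trans (hwz.trans hlt))) (ne_of_gt hwz) (ne_of_gt (hwz.trans hlt)) hz'

lemma lem_add_lt (f : ℝ → ℝ) (hf : StrictConvexOn ℝ (Set.Ioi 0) f) (r : ℝ)
    (h : Tendsto (fun t : ℝ => f t / t) atTop (nhds r)) {y d : ℝ} (hy : 0 < y) (hd : 0 < d) :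
    f (y + d) < f y + d * r := by
  have h1 : (f (y + d) - f y) / (y + d - y) < (f (y + d + 1) - f (y + d)) / (y + d + 1 - (y + d)) :=
    hf.slope_strict_mono_adjacent (mem_Ioi.mpr hy) (mem_Ioi.mpr (by linarith))
      (by linarith) (by linarith)
  have h2 : (f (y + d + 1) - f (y + d)) / (y + d + 1 - (y + d)) ≤ r :=
    slope_le_of_tendsto f hf.convexOn r h (by linarith) (by linarith)
  have h3 : (f (y + d) - f y) / d < r := by
    have : y + d - y = d := by ring
    rw [this] at h1; linarith
  rw [div_lt_iff₀ hd] at h3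
  linarith [h3]

lemma lem_zero_slope_le (f : ℝ → ℝ) (hf : StrictConvexOn ℝ (Set.Ioi 0) f) (r₀ : ℝ)
    (h0 : Tendsto f (nhdsWithin 0 (Set.Ioi 0)) (nhds r₀)) {t x : ℝ} (ht : 0 < t) (htx : t < x) :
    f t ≤ (1 - t / x) * r₀ + t / x * f x := by
  have hx : 0 < x := ht.trans htx
  have hu : Tendsto (fun u : ℝ => u) (nhdsWithin 0 (Set.Ioi 0)) (nhds (0:ℝ)) :=
    tendsto_id.mono_left nhdsWithin_le_nhds
  have hlim : Tendsto (fun u : ℝ => ((x - t) * f u + (t - u) * f x) / (x - u))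
      (nhdsWithin 0 (Set.Ioi 0)) (nhds (((x - t) * r₀ + (t - 0) * f x) / (x - 0))) :=
    ((tendsto_const_nhds.mul h0).add ((tendsto_const_nhds.sub hu).mul tendsto_const_nhds)).div
      (tendsto_const_nhds.sub hu) (by simpa using hx.ne')
  have key : f t ≤ ((x - t) * r₀ + (t - 0) * f x) / (x - 0) := by
    refine ge_of_tendsto hlim ?_
    filter_upwards [Ioo_mem_nhdsGT_of_mem (Set.left_mem_Ico.mpr ht)] with u hu'
    obtain ⟨hu0, hut⟩ := hu'
    have h1 : (x - u) * f t ≤ (x - t) * f u + (t - u) * f x :=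
      hf.convexOn.secant_mono_aux1 (mem_Ioi.mpr hu0) (mem_Ioi.mpr hx) hut htx
    rw [le_div_iff₀ (by linarith : (0:ℝ) < x - u), mul_comm]
    linarith
  rw [sub_zero, sub_zero] at key
  have hx' : x ≠ 0 := hx.ne'
  calc f t ≤ ((x - t) * r₀ + t * f x) / x := key
    _ = (1 - t / x) * r₀ + t / x * f x := by field_simp

lemma lem_lt_linear (f : ℝ → ℝ) (hf : StrictConvexOn ℝ (Set.Ioi 0) f) (r₀ r : ℝ)
    (h0 : Tendsto f (nhdsWithin 0 (Set.Ioi 0)) (nhds r₀))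
    (h : Tendsto (fun t : ℝ => f t / t) atTop (nhds r)) {x : ℝ} (hx : 0 < x) :
    f x < r₀ + x * r := by
  have hu : Tendsto (fun u : ℝ => u) (nhdsWithin 0 (Set.Ioi 0)) (nhds (0:ℝ)) :=
    tendsto_id.mono_left nhdsWithin_le_nhds
  have hlim : Tendsto (fun t : ℝ => (f x - f t) / (x - t)) (nhdsWithin 0 (Set.Ioi 0))
      (nhds ((f x - r₀) / (x - 0))) :=
    (tendsto_const_nhds.sub h0).div (tendsto_const_nhds.sub hu) (by simpa using hx.ne')
  set c : ℝ := (f (x + 1) - f x) / (x + 1 - x) with hc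
  have claim1 : (f x - r₀) / (x - 0) ≤ c := by
    refine le_of_tendsto hlim ?_
    filter_upwards [Ioo_mem_nhdsGT_of_mem (Set.left_mem_Ico.mpr hx)] with t ht
    obtain ⟨ht0, htx⟩ := ht
    exact hf.convexOn.slope_mono_adjacent (mem_Ioi.mpr ht0) (mem_Ioi.mpr (by linarith))
      htx (by linarith)
  have claim2 : c < (f (x + 2) - f (x + 1)) / (x + 2 - (x + 1)) := by
    have := hf.slope_strict_mono_adjacent (x := x) (y := x + 1) (z := x + 2)
      (mem_Ioi.mpr hx) (mem_Ioi.mpr (by linarith)) (by linarith) (by linarith)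
    convert this using 2
  have claim3 : (f (x + 2) - f (x + 1)) / (x + 2 - (x + 1)) ≤ r :=
    slope_le_of_tendsto f hf.convexOn r h (by linarith) (by linarith)
  have : (f x - r₀) / (x - 0) < r := lt_of_le_of_lt claim1 (lt_of_lt_of_le claim2 claim3)
  rw [sub_zero, div_lt_iff₀ hx] at this
  linarith

lemma lem_theta (f : ℝ → ℝ) (hf : StrictConvexOn ℝ (Set.Ioi 0) f) (r₀ : ℝ)
    (h0 : Tendsto f (nhdsWithin 0 (Set.Ioi 0)) (nhds r₀)) {θ x : ℝ}
    (hθ0 : 0 < θ) (hθ1 : θ < 1) (hx : 0 < x) :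
    f (θ * x) < (1 - θ) * r₀ + θ * f x := by
  set t : ℝ := θ * x / 2 with htdef
  have ht0 : 0 < t := by positivity
  have htθx : t < θ * x := by nlinarith
  have hθxx : θ * x < x := by nlinarith
  have hxt : 0 < x - t := by linarith
  have hA : (x - t) * f (θ * x) < (x - θ * x) * f t + (θ * x - t) * f x :=
    hf.secant_strict_mono_aux1 (mem_Ioi.mpr ht0) (mem_Ioi.mpr hx) htθx hθxx
  have hB : f t ≤ (1 - t / x) * r₀ + t / x * f x :=
    lem_zero_slope_le f hf r₀ h0 ht0 (by linarith)
  have e1 : (x - θ * x) * (1 - t / x) = (1 - θ) * (x - t) := by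
    field_simp
  have e2 : (x - θ * x) * (t / x) + (θ * x - t) = θ * (x - t) := by
    field_simp; ring
  have hB' : (x - θ * x) * f t ≤ (x - θ * x) * ((1 - t / x) * r₀ + t / x * f x) :=
    mul_le_mul_of_nonneg_left hB (by linarith)
  have e3 : (x - θ * x) * ((1 - t / x) * r₀ + t / x * f x) + (θ * x - t) * f x
      = (1 - θ) * (x - t) * r₀ + θ * (x - t) * f x := by
    linear_combination r₀ * e1 + f x * e2
  have e4 : (x - t) * ((1 - θ) * r₀ + θ * f x)
      = (1 - θ) * (x - t) * r₀ + θ * (x - t) * f x := by ring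
  have h4 : (x - t) * f (θ * x) < (x - t) * ((1 - θ) * r₀ + θ * f x) := by linarith
  exact lt_of_mul_lt_mul_left h4 (by linarith)

lemma contraA (f : ℝ → ℝ) (hf : StrictConvexOn ℝ (Set.Ioi 0) f) (f0 : EReal)
    (hf0bot : f0 ≠ ⊥)
    (hf0 : Tendsto (fun t : ℝ => (f t : EReal)) (nhdsWithin 0 (Set.Ioi 0)) (nhds f0))
    {a₂ b₁ b₂ : ℝ} (ha₂ : 0 < a₂) (hb₁ : 0 < b₁) (hb₂ : 0 < b₂)
    (heq : (((b₁ + b₂) * f (a₂ / (b₁ + b₂)) : ℝ) : EReal)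
      = f0 * (b₁ : EReal) + ((b₂ * f (a₂ / b₂) : ℝ) : EReal)) : False := by
  by_cases htop : f0 = ⊤
  · rw [htop, EReal.top_mul_coe_of_pos hb₁, EReal.top_add_of_ne_bot (EReal.coe_ne_bot _)] at heq
    exact EReal.coe_ne_top _ heq
  lift f0 to ℝ using ⟨htop, hf0bot⟩ with r₀
  have h0 : Tendsto f (nhdsWithin 0 (Set.Ioi 0)) (nhds r₀) := EReal.tendsto_coe.mp hf0
  rw [← EReal.coe_mul, ← EReal.coe_add] at heq
  have E : (b₁ + b₂) * f (a₂ / (b₁ + b₂)) = r₀ * b₁ + b₂ * f (a₂ / b₂) := by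
    exact_mod_cast heq
  have hbsum : 0 < b₁ + b₂ := by linarith
  have hθ0 : 0 < b₂ / (b₁ + b₂) := by positivity
  have hθ1 : b₂ / (b₁ + b₂) < 1 := by rw [div_lt_one hbsum]; linarith
  have hxpos : 0 < a₂ / b₂ := by positivity
  have hlt := lem_theta f hf r₀ h0 hθ0 hθ1 hxpos
  have hrw : b₂ / (b₁ + b₂) * (a₂ / b₂) = a₂ / (b₁ + b₂) := by
    field_simp
  rw [hrw] at hlt
  have h1 := mul_lt_mul_of_pos_left hlt hbsum
  have e : (b₁ + b₂) * ((1 - b₂ / (b₁ + b₂)) * r₀ + b₂ / (b₁ + b₂) * f (a₂ / b₂))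
      = b₁ * r₀ + b₂ * f (a₂ / b₂) := by field_simp; ring
  linarith

lemma contraB (f : ℝ → ℝ) (hf : StrictConvexOn ℝ (Set.Ioi 0) f) (f0 finf : EReal)
    (hf0bot : f0 ≠ ⊥) (hfinfbot : finf ≠ ⊥)
    (hf0 : Tendsto (fun t : ℝ => (f t : EReal)) (nhdsWithin 0 (Set.Ioi 0)) (nhds f0))
    (hfinf : Tendsto (fun t : ℝ => ((f t / t : ℝ) : EReal)) atTop (nhds finf))
    {a₁ a₂ b₂ : ℝ} (ha₁ : 0 < a₁) (ha₂ : 0 ≤ a₂) (hb₂ : 0 < b₂)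
    (heq : ((b₂ * f ((a₁ + a₂) / b₂) : ℝ) : EReal)
      = finf * (a₁ : EReal) + perspective f f0 finf a₂ b₂) : False := by
  have hP₂bot : perspective f f0 finf a₂ b₂ ≠ ⊥ := by
    rw [perspective, if_pos hb₂]
    split_ifs with h
    · exact EReal.coe_ne_bot _
    · by_cases htop : f0 = ⊤
      · rw [htop, EReal.top_mul_coe_of_pos hb₂]; exact top_ne_bot
      · lift f0 to ℝ using ⟨htop, hf0bot⟩
        rw [← EReal.coe_mul]; exact EReal.coe_ne_bot _
  by_cases htopf : finf = ⊤
  · rw [htopf] at heq hP₂bot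
    rw [EReal.top_mul_coe_of_pos ha₁, EReal.top_add_of_ne_bot hP₂bot] at heq
    exact EReal.coe_ne_top _ heq
  lift finf to ℝ using ⟨htopf, hfinfbot⟩ with r
  have hr : Tendsto (fun t : ℝ => f t / t) atTop (nhds r) := EReal.tendsto_coe.mp hfinf
  rcases ha₂.eq_or_lt with ha₂0 | ha₂p
  · -- a₂ = 0
    rw [perspective, if_pos hb₂, if_neg (by rw [← ha₂0]; exact lt_irrefl 0)] at heq
    by_cases htop : f0 = ⊤
    · rw [htop, EReal.top_mul_coe_of_pos hb₂, ← EReal.coe_mul,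
        EReal.add_top_of_ne_bot (EReal.coe_ne_bot _)] at heq
      exact EReal.coe_ne_top _ heq
    lift f0 to ℝ using ⟨htop, hf0bot⟩ with r₀
    have h0 : Tendsto f (nhdsWithin 0 (Set.Ioi 0)) (nhds r₀) := EReal.tendsto_coe.mp hf0
    rw [← EReal.coe_mul, ← EReal.coe_mul, ← EReal.coe_add] at heq
    have E : b₂ * f ((a₁ + a₂) / b₂) = r * a₁ + r₀ * b₂ := by exact_mod_cast heq
    rw [← ha₂0, add_zero] at E
    have hx : 0 < a₁ / b₂ := by positivity
    have hlt := lem_lt_linear f hf r₀ r h0 hr hx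
    have h1 := mul_lt_mul_of_pos_left hlt hb₂
    have e : b₂ * (r₀ + a₁ / b₂ * r) = r₀ * b₂ + r * a₁ := by field_simp
    linarith
  · -- a₂ > 0
    rw [perspective, if_pos hb₂, if_pos ha₂p, ← EReal.coe_mul, ← EReal.coe_add] at heq
    have E : b₂ * f ((a₁ + a₂) / b₂) = r * a₁ + b₂ * f (a₂ / b₂) := by exact_mod_cast heq
    have hy : 0 < a₂ / b₂ := by positivity
    have hd : 0 < a₁ / b₂ := by positivity
    have hlt := lem_add_lt f hf r hr hy hd
    have hrw : a₂ / b₂ + a₁ / b₂ = (a₁ + a₂) / b₂ := by field_simp; ring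
    rw [hrw] at hlt
    have h1 := mul_lt_mul_of_pos_left hlt hb₂
    have e : b₂ * (f (a₂ / b₂) + a₁ / b₂ * r) = b₂ * f (a₂ / b₂) + r * a₁ := by
      field_simp
    linarith


/-- If `f : (0,∞) → ℝ` is strictly convex, `a₁+a₂ > 0`, `b₁+b₂ > 0`, and the perspective
of `f` is additive at `((a₁,b₁),(a₂,b₂))`, i.e.
`(b₁+b₂)·f((a₁+a₂)/(b₁+b₂)) = b₁·f(a₁/b₁) + b₂·f(a₂/b₂)` with the boundary conventions,
then `(a₁,a₂) = k·(b₁,b₂)` for some `k > 0`. -/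
theorem perspective_additive_implies_proportional
    (f : ℝ → ℝ) (hf : StrictConvexOn ℝ (Set.Ioi 0) f)
    (f0 finf : EReal) (hf0bot : f0 ≠ ⊥) (hfinfbot : finf ≠ ⊥)
    (hf0 : Tendsto (fun t : ℝ => (f t : EReal)) (nhdsWithin 0 (Set.Ioi 0)) (nhds f0))
    (hfinf : Tendsto (fun t : ℝ => ((f t / t : ℝ) : EReal)) atTop (nhds finf))
    (a₁ a₂ b₁ b₂ : ℝ) (ha₁ : 0 ≤ a₁) (ha₂ : 0 ≤ a₂) (hb₁ : 0 ≤ b₁) (hb₂ : 0 ≤ b₂)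
    (ha : 0 < a₁ + a₂) (hb : 0 < b₁ + b₂)
    (heq : perspective f f0 finf (a₁ + a₂) (b₁ + b₂)
        = perspective f f0 finf a₁ b₁ + perspective f f0 finf a₂ b₂) :
    ∃ k : ℝ, 0 < k ∧ a₁ = k * b₁ ∧ a₂ = k * b₂ := by
  have hL : perspective f f0 finf (a₁ + a₂) (b₁ + b₂)
      = (((b₁ + b₂) * f ((a₁ + a₂) / (b₁ + b₂)) : ℝ) : EReal) := by
    rw [perspective, if_pos hb, if_pos ha]
  rcases hb₁.eq_or_lt with hb₁0 | hb₁p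
  · obtain rfl : b₁ = 0 := hb₁0.symm
    have hb₂p : 0 < b₂ := by simpa using hb
    rcases ha₁.eq_or_lt with ha₁0 | ha₁p
    · obtain rfl : a₁ = 0 := ha₁0.symm
      have ha₂p : 0 < a₂ := by simpa using ha
      exact ⟨a₂ / b₂, by positivity, by rw [mul_zero], (div_mul_cancel₀ a₂ hb₂p.ne').symm⟩
    · exfalso
      have hR1 : perspective f f0 finf a₁ 0 = finf * (a₁ : EReal) := by
        rw [perspective, if_neg (lt_irrefl 0)]
      rw [hL, hR1, zero_add] at heq
      exact contraB f hf f0 finf hf0bot hfinfbot hf0 hfinf ha₁p ha₂ hb₂p heq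
  rcases hb₂.eq_or_lt with hb₂0 | hb₂p
  · obtain rfl : b₂ = 0 := hb₂0.symm
    rcases ha₂.eq_or_lt with ha₂0 | ha₂p
    · obtain rfl : a₂ = 0 := ha₂0.symm
      have ha₁p : 0 < a₁ := by simpa using ha
      exact ⟨a₁ / b₁, by positivity, (div_mul_cancel₀ a₁ hb₁p.ne').symm, by rw [mul_zero]⟩
    · exfalso
      have hR2 : perspective f f0 finf a₂ 0 = finf * (a₂ : EReal) := by
        rw [perspective, if_neg (lt_irrefl 0)]
      rw [hL, hR2, add_zero, add_comm (perspective f f0 finf a₁ b₁),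
        add_comm a₁ a₂] at heq
      exact contraB f hf f0 finf hf0bot hfinfbot hf0 hfinf ha₂p ha₁ hb₁p heq
  -- both b₁, b₂ > 0
  rcases ha₁.eq_or_lt with ha₁0 | ha₁p
  · obtain rfl : a₁ = 0 := ha₁0.symm
    have ha₂p : 0 < a₂ := by simpa using ha
    exfalso
    have hR1 : perspective f f0 finf 0 b₁ = f0 * (b₁ : EReal) := by
      rw [perspective, if_pos hb₁p, if_neg (lt_irrefl 0)]
    have hR2 : perspective f f0 finf a₂ b₂ = ((b₂ * f (a₂ / b₂) : ℝ) : EReal) := by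
      rw [perspective, if_pos hb₂p, if_pos ha₂p]
    rw [hL, hR1, hR2, zero_add] at heq
    exact contraA f hf f0 hf0bot hf0 ha₂p hb₁p hb₂p heq
  rcases ha₂.eq_or_lt with ha₂0 | ha₂p
  · obtain rfl : a₂ = 0 := ha₂0.symm
    exfalso
    have hR1 : perspective f f0 finf a₁ b₁ = ((b₁ * f (a₁ / b₁) : ℝ) : EReal) := by
      rw [perspective, if_pos hb₁p, if_pos ha₁p]
    have hR2 : perspective f f0 finf 0 b₂ = f0 * (b₂ : EReal) := by
      rw [perspective, if_pos hb₂p, if_neg (lt_irrefl 0)]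
    rw [hL, hR1, hR2, add_zero, add_comm (((b₁ * f (a₁ / b₁) : ℝ) : EReal)),
      add_comm b₁ b₂] at heq
    exact contraA f hf f0 hf0bot hf0 ha₁p hb₂p hb₁p heq
  -- all positive
  have hR1 : perspective f f0 finf a₁ b₁ = ((b₁ * f (a₁ / b₁) : ℝ) : EReal) := by
    rw [perspective, if_pos hb₁p, if_pos ha₁p]
  have hR2 : perspective f f0 finf a₂ b₂ = ((b₂ * f (a₂ / b₂) : ℝ) : EReal) := by
    rw [perspective, if_pos hb₂p, if_pos ha₂p]
  rw [hL, hR1, hR2, ← EReal.coe_add] at heq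
  have E : (b₁ + b₂) * f ((a₁ + a₂) / (b₁ + b₂)) = b₁ * f (a₁ / b₁) + b₂ * f (a₂ / b₂) := by
    exact_mod_cast heq
  have hx : 0 < a₁ / b₁ := by positivity
  have hy : 0 < a₂ / b₂ := by positivity
  have hxy : a₁ / b₁ = a₂ / b₂ := by
    by_contra hne
    have hw₁ : 0 < b₁ / (b₁ + b₂) := by positivity
    have hw₂ : 0 < b₂ / (b₁ + b₂) := by positivity
    have hsum : b₁ / (b₁ + b₂) + b₂ / (b₁ + b₂) = 1 := by field_simp
    have hlt := hf.2 (mem_Ioi.mpr hx) (mem_Ioi.mpr hy) hne hw₁ hw₂ hsum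
    simp only [smul_eq_mul] at hlt
    have e1 : b₁ / (b₁ + b₂) * (a₁ / b₁) + b₂ / (b₁ + b₂) * (a₂ / b₂)
        = (a₁ + a₂) / (b₁ + b₂) := by field_simp
    rw [e1] at hlt
    have h2 := mul_lt_mul_of_pos_left hlt hb
    have e2 : (b₁ + b₂) * (b₁ / (b₁ + b₂) * f (a₁ / b₁) + b₂ / (b₁ + b₂) * f (a₂ / b₂))
        = b₁ * f (a₁ / b₁) + b₂ * f (a₂ / b₂) := by field_simp
    linarith
  exact ⟨a₁ / b₁, hx, (div_mul_cancel₀ a₁ hb₁p.ne').symm,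
    by rw [hxy]; exact (div_mul_cancel₀ a₂ hb₂p.ne').symm⟩
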